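/- Let f : I ⊂ ℝ → ℝ be a differentiable mapping on an interval I, and let a, r ∈ I with a < r. If f' is integrable on [a, r], then for every α > 0 the following equality for Riemann–Liouville fractional integrals holds: (f(a) + f(r))/2 − (Γ(α+1)/(2(r−a)^α)) · [J_{a+}^α f(r) + J_{r−}^α f(a)] = ((r−a)/2) · ∫₀¹ ((1−t)^α − t^α) · f'(r + (a−r)t) dt. -/

import Mathlib

open MeasureTheory Set

/-- Riemann–Liouville left fractional integral `J_{a+}^α f (x)`. -/
noncomputable def RLleft (α a : ℝ) (f : ℝ → ℝ) (x : ℝ) : ℝ :=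
  (1 / Real.Gamma α) * ∫ t in a..x, (x - t) ^ (α - 1) * f t

/-- Riemann–Liouville right fractional integral `J_{b-}^α f (x)`. -/
noncomputable def RLright (α b : ℝ) (f : ℝ → ℝ) (x : ℝ) : ℝ :=
  (1 / Real.Gamma α) * ∫ t in x..b, (t - x) ^ (α - 1) * f t

/-- `g` is `s`-convex in the second sense on `D`. -/
def SConvexOn (s : ℝ) (D : Set ℝ) (g : ℝ → ℝ) : Prop :=
  ∀ x ∈ D, ∀ y ∈ D, ∀ t ∈ Set.Icc (0:ℝ) 1,
    g (t * x + (1 - t) * y) ≤ t ^ s * g x + (1 - t) ^ s * g y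

/-- `g` is `s`-concave in the second sense on `D`. -/
def SConcaveOn (s : ℝ) (D : Set ℝ) (g : ℝ → ℝ) : Prop :=
  ∀ x ∈ D, ∀ y ∈ D, ∀ t ∈ Set.Icc (0:ℝ) 1,
    t ^ s * g x + (1 - t) ^ s * g y ≤ g (t * x + (1 - t) * y)

/-- Incomplete Beta function `β(x; p, q) = ∫₀ˣ t^(p-1) (1-t)^(q-1) dt`. -/
noncomputable def incBeta (x p q : ℝ) : ℝ :=
  ∫ t in (0:ℝ)..x, t ^ (p - 1) * (1 - t) ^ (q - 1)

theorem lemma1_fractional_identity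
    (I : Set ℝ) (hI : I.OrdConnected) (f f' : ℝ → ℝ) (a r α : ℝ)
    (haI : a ∈ I) (hrI : r ∈ I) (har : a < r)
    (hderiv : ∀ x ∈ I, HasDerivAt f (f' x) x)
    (hint : IntervalIntegrable f' volume a r)
    (hα : 0 < α) :
    (f a + f r) / 2 -
        Real.Gamma (α + 1) / (2 * (r - a) ^ α) * (RLleft α a f r + RLright α r f a) =
      (r - a) / 2 * ∫ t in (0:ℝ)..1, ((1 - t) ^ α - t ^ α) * f' (r + (a - r) * t) := by
  have hra : (0:ℝ) < r - a := sub_pos.mpr har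
  have harne : a - r ≠ 0 := by intro h; exact hra.ne' (by linarith)
  have hsub : Icc a r ⊆ I := hI.out haI hrI
  have hmem : ∀ t ∈ Icc (0:ℝ) 1, r + (a - r) * t ∈ Icc a r := by
    intro t ht
    constructor <;> nlinarith [ht.1, ht.2]
  have hγc : Continuous (fun t : ℝ => r + (a - r) * t) := by continuity
  have hfγ : ContinuousOn (fun t => f (r + (a - r) * t)) (Icc 0 1) := fun t ht =>
    (ContinuousAt.comp (f := fun t : ℝ => r + (a - r) * t)
      (hderiv _ (hsub (hmem t ht))).continuousAt hγc.continuousAt).continuousWithinAt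
  have hf'γ : IntervalIntegrable (fun t => f' (r + (a - r) * t)) volume 0 1 := by
    have h1 := hint.comp_add_left r
    have h2 := h1.comp_mul_left (c := a - r)
    rw [div_self harne] at h2
    simp only [sub_self, zero_div] at h2
    exact h2.symm
  have hcont1 : Continuous (fun t : ℝ => (1 - t) ^ α) :=
    (continuous_const.sub continuous_id).rpow_const (fun x => Or.inr hα.le)
  have hcont2 : Continuous (fun t : ℝ => t ^ α) :=
    continuous_id.rpow_const (fun x => Or.inr hα.le)
  have hint1 : IntervalIntegrable (fun t : ℝ => (1 - t) ^ (α - 1)) volume 0 1 := by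
    have := (intervalIntegral.intervalIntegrable_rpow' (a := 1) (b := 0) (by linarith : (-1:ℝ) < α - 1)).comp_sub_left 1
    simpa using this
  have hint2 : IntervalIntegrable (fun t : ℝ => t ^ (α - 1)) volume 0 1 :=
    intervalIntegral.intervalIntegrable_rpow' (by linarith)
  have huIcc : Set.uIcc (0:ℝ) 1 = Icc (0:ℝ) 1 := uIcc_of_le zero_le_one
  have hA1int : IntervalIntegrable (fun t => (1 - t) ^ (α - 1) * f (r + (a - r) * t)) volume 0 1 :=
    hint1.mul_continuousOn (huIcc ▸ hfγ)
  have hA2int : IntervalIntegrable (fun t => t ^ (α - 1) * f (r + (a - r) * t)) volume 0 1 :=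
    hint2.mul_continuousOn (huIcc ▸ hfγ)
  have hJ1int : IntervalIntegrable (fun t => (1 - t) ^ α * f' (r + (a - r) * t)) volume 0 1 :=
    hf'γ.continuousOn_mul hcont1.continuousOn
  have hJ2int : IntervalIntegrable (fun t => t ^ α * f' (r + (a - r) * t)) volume 0 1 :=
    hf'γ.continuousOn_mul hcont2.continuousOn
  -- derivative of F
  have hFderiv : ∀ t ∈ Ioo (0:ℝ) 1,
      HasDerivAt (fun t => (1 - t) ^ α * f (r + (a - r) * t))
        (-(α * (1 - t) ^ (α - 1)) * f (r + (a - r) * t)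
          + (1 - t) ^ α * ((a - r) * f' (r + (a - r) * t))) t := by
    intro t ht
    have hne : 1 - t ≠ 0 := by have := ht.2; intro h; linarith
    have hpow := Real.hasDerivAt_rpow_const (x := 1 - t) (p := α) (Or.inl hne)
    have hlin : HasDerivAt (fun t : ℝ => 1 - t) (-1) t := by
      simpa using (hasDerivAt_id t).const_sub 1
    have h1 : HasDerivAt (fun t : ℝ => (1 - t) ^ α) (α * (1 - t) ^ (α - 1) * (-1)) t :=
      hpow.comp t hlin
    have hlin2 : HasDerivAt (fun t : ℝ => r + (a - r) * t) (a - r) t := by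
      simpa using ((hasDerivAt_id t).const_mul (a - r)).const_add r
    have h2 : HasDerivAt (fun t => f (r + (a - r) * t)) (f' (r + (a - r) * t) * (a - r)) t :=
      (hderiv _ (hsub (hmem t (Ioo_subset_Icc_self ht)))).comp t hlin2
    have := h1.mul h2
    convert this using 1
    all_goals first | rfl | ring
  have hGderiv : ∀ t ∈ Ioo (0:ℝ) 1,
      HasDerivAt (fun t => t ^ α * f (r + (a - r) * t))
        (α * t ^ (α - 1) * f (r + (a - r) * t)
          + t ^ α * ((a - r) * f' (r + (a - r) * t))) t := by
    intro t ht
    have hne : t ≠ 0 := ne_of_gt ht.1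
    have h1 : HasDerivAt (fun t : ℝ => t ^ α) (α * t ^ (α - 1)) t := by
      simpa using Real.hasDerivAt_rpow_const (x := t) (p := α) (Or.inl hne)
    have hlin2 : HasDerivAt (fun t : ℝ => r + (a - r) * t) (a - r) t := by
      simpa using ((hasDerivAt_id t).const_mul (a - r)).const_add r
    have h2 : HasDerivAt (fun t => f (r + (a - r) * t)) (f' (r + (a - r) * t) * (a - r)) t :=
      (hderiv _ (hsub (hmem t (Ioo_subset_Icc_self ht)))).comp t hlin2
    have := h1.mul h2
    convert this using 1
    all_goals first | rfl | ring
  -- integrability of derivative integrands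
  have h5 : IntervalIntegrable (fun t => -(α * (1 - t) ^ (α - 1)) * f (r + (a - r) * t)) volume 0 1 := by
    have h := hA1int.const_mul (-α)
    have e : (fun t => (-α) * ((1 - t) ^ (α - 1) * f (r + (a - r) * t)))
        = fun t => -(α * (1 - t) ^ (α - 1)) * f (r + (a - r) * t) := by funext t; ring
    rwa [e] at h
  have h6 : IntervalIntegrable (fun t => (1 - t) ^ α * ((a - r) * f' (r + (a - r) * t))) volume 0 1 := by
    have h := hJ1int.const_mul (a - r)
    have e : (fun t => (a - r) * ((1 - t) ^ α * f' (r + (a - r) * t)))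
        = fun t => (1 - t) ^ α * ((a - r) * f' (r + (a - r) * t)) := by funext t; ring
    rwa [e] at h
  have h7 : IntervalIntegrable (fun t => α * t ^ (α - 1) * f (r + (a - r) * t)) volume 0 1 := by
    have h := hA2int.const_mul α
    have e : (fun t => α * (t ^ (α - 1) * f (r + (a - r) * t)))
        = fun t => α * t ^ (α - 1) * f (r + (a - r) * t) := by funext t; ring
    rwa [e] at h
  have h8 : IntervalIntegrable (fun t => t ^ α * ((a - r) * f' (r + (a - r) * t))) volume 0 1 := by
    have h := hJ2int.const_mul (a - r)
    have e : (fun t => (a - r) * (t ^ α * f' (r + (a - r) * t)))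
        = fun t => t ^ α * ((a - r) * f' (r + (a - r) * t)) := by funext t; ring
    rwa [e] at h
  have hFTC1 : (∫ t in (0:ℝ)..1, (-(α * (1 - t) ^ (α - 1)) * f (r + (a - r) * t)
      + (1 - t) ^ α * ((a - r) * f' (r + (a - r) * t))))
      = (1 - (1:ℝ)) ^ α * f (r + (a - r) * 1) - (1 - (0:ℝ)) ^ α * f (r + (a - r) * 0) :=
    intervalIntegral.integral_eq_sub_of_hasDeriv_right_of_le zero_le_one
      (hcont1.continuousOn.mul hfγ)
      (fun t ht => (hFderiv t ht).hasDerivWithinAt)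
      (h5.add h6)
  have hFTC2 : (∫ t in (0:ℝ)..1, (α * t ^ (α - 1) * f (r + (a - r) * t)
      + t ^ α * ((a - r) * f' (r + (a - r) * t))))
      = (1:ℝ) ^ α * f (r + (a - r) * 1) - (0:ℝ) ^ α * f (r + (a - r) * 0) :=
    intervalIntegral.integral_eq_sub_of_hasDeriv_right_of_le zero_le_one
      (hcont2.continuousOn.mul hfγ)
      (fun t ht => (hGderiv t ht).hasDerivWithinAt)
      (h7.add h8)
  have eq1 : (a - r) * (∫ t in (0:ℝ)..1, (1 - t) ^ α * f' (r + (a - r) * t))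
      = -(f r) + α * ∫ t in (0:ℝ)..1, (1 - t) ^ (α - 1) * f (r + (a - r) * t) := by
    rw [intervalIntegral.integral_add h5 h6] at hFTC1
    have e5 : (∫ t in (0:ℝ)..1, -(α * (1 - t) ^ (α - 1)) * f (r + (a - r) * t))
        = -α * ∫ t in (0:ℝ)..1, (1 - t) ^ (α - 1) * f (r + (a - r) * t) := by
      rw [← intervalIntegral.integral_const_mul]
      exact intervalIntegral.integral_congr fun t _ => by ring
    have e6 : (∫ t in (0:ℝ)..1, (1 - t) ^ α * ((a - r) * f' (r + (a - r) * t)))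
        = (a - r) * ∫ t in (0:ℝ)..1, (1 - t) ^ α * f' (r + (a - r) * t) := by
      rw [← intervalIntegral.integral_const_mul]
      exact intervalIntegral.integral_congr fun t _ => by ring
    rw [e5, e6] at hFTC1
    have hF1 : (1 - (1:ℝ)) ^ α * f (r + (a - r) * 1) = 0 := by
      rw [sub_self, Real.zero_rpow hα.ne', zero_mul]
    have hF0 : (1 - (0:ℝ)) ^ α * f (r + (a - r) * 0) = f r := by
      norm_num [Real.one_rpow]
    rw [hF1, hF0] at hFTC1
    linarith [hFTC1]
  have eq2 : (a - r) * (∫ t in (0:ℝ)..1, t ^ α * f' (r + (a - r) * t))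
      = f a - α * ∫ t in (0:ℝ)..1, t ^ (α - 1) * f (r + (a - r) * t) := by
    rw [intervalIntegral.integral_add h7 h8] at hFTC2
    have e7 : (∫ t in (0:ℝ)..1, α * t ^ (α - 1) * f (r + (a - r) * t))
        = α * ∫ t in (0:ℝ)..1, t ^ (α - 1) * f (r + (a - r) * t) := by
      rw [← intervalIntegral.integral_const_mul]
      exact intervalIntegral.integral_congr fun t _ => by ring
    have e8 : (∫ t in (0:ℝ)..1, t ^ α * ((a - r) * f' (r + (a - r) * t)))
        = (a - r) * ∫ t in (0:ℝ)..1, t ^ α * f' (r + (a - r) * t) := by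
      rw [← intervalIntegral.integral_const_mul]
      exact intervalIntegral.integral_congr fun t _ => by ring
    rw [e7, e8] at hFTC2
    have hG1 : (1:ℝ) ^ α * f (r + (a - r) * 1) = f a := by
      rw [Real.one_rpow]; norm_num
    have hG0 : (0:ℝ) ^ α * f (r + (a - r) * 0) = 0 := by
      rw [Real.zero_rpow hα.ne', zero_mul]
    rw [hG1, hG0] at hFTC2
    linarith [hFTC2]
  have hpowsplit : (r - a) ^ α = (r - a) * (r - a) ^ (α - 1) := by
    have h : (r - a) ^ ((1:ℝ) + (α - 1)) = (r - a) ^ (1:ℝ) * (r - a) ^ (α - 1) :=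
      Real.rpow_add hra 1 (α - 1)
    have e : (1:ℝ) + (α - 1) = α := by ring
    rw [e, Real.rpow_one] at h
    exact h
  have hrapowne : (r - a) ^ (α - 1) ≠ 0 := (Real.rpow_pos_of_pos hra _).ne'
  have hsubA2 : (∫ t in (0:ℝ)..1, t ^ (α - 1) * f (r + (a - r) * t))
      = ((r - a) ^ α)⁻¹ * ∫ u in a..r, (r - u) ^ (α - 1) * f u := by
    have h := intervalIntegral.integral_comp_mul_add (a := 0) (b := 1)
      (f := fun u => ((r - u) / (r - a)) ^ (α - 1) * f u) harne r
    have e1 : (∫ x in (0:ℝ)..1, ((r - ((a - r) * x + r)) / (r - a)) ^ (α - 1) * f ((a - r) * x + r))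
        = ∫ t in (0:ℝ)..1, t ^ (α - 1) * f (r + (a - r) * t) := by
      apply intervalIntegral.integral_congr
      intro t _
      show ((r - ((a - r) * t + r)) / (r - a)) ^ (α - 1) * f ((a - r) * t + r)
          = t ^ (α - 1) * f (r + (a - r) * t)
      have e3 : (a - r) * t + r = r + (a - r) * t := by ring
      rw [e3, show (r - (r + (a - r) * t)) / (r - a) = t by field_simp; ring]
    rw [e1] at h
    have e4 : (a - r) * 0 + r = r := by ring
    have e5 : (a - r) * 1 + r = a := by ring
    rw [e4, e5] at h
    rw [h, intervalIntegral.integral_symm]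
    have e6 : (∫ u in a..r, ((r - u) / (r - a)) ^ (α - 1) * f u)
        = ((r - a) ^ (α - 1))⁻¹ * ∫ u in a..r, (r - u) ^ (α - 1) * f u := by
      rw [← intervalIntegral.integral_const_mul]
      apply intervalIntegral.integral_congr
      intro u hu
      rw [uIcc_of_le har.le] at hu
      show ((r - u) / (r - a)) ^ (α - 1) * f u = ((r - a) ^ (α - 1))⁻¹ * ((r - u) ^ (α - 1) * f u)
      rw [Real.div_rpow (by linarith [hu.2]) hra.le]
      field_simp
    rw [e6]
    rw [smul_eq_mul]
    field_simp [hpowsplit]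
    rw [hpowsplit]; ring
  have hsubA1 : (∫ t in (0:ℝ)..1, (1 - t) ^ (α - 1) * f (r + (a - r) * t))
      = ((r - a) ^ α)⁻¹ * ∫ u in a..r, (u - a) ^ (α - 1) * f u := by
    have h := intervalIntegral.integral_comp_mul_add (a := 0) (b := 1)
      (f := fun u => ((u - a) / (r - a)) ^ (α - 1) * f u) harne r
    have e1 : (∫ x in (0:ℝ)..1, ((((a - r) * x + r) - a) / (r - a)) ^ (α - 1) * f ((a - r) * x + r))
        = ∫ t in (0:ℝ)..1, (1 - t) ^ (α - 1) * f (r + (a - r) * t) := by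
      apply intervalIntegral.integral_congr
      intro t _
      show (((a - r) * t + r - a) / (r - a)) ^ (α - 1) * f ((a - r) * t + r)
          = (1 - t) ^ (α - 1) * f (r + (a - r) * t)
      have e3 : (a - r) * t + r = r + (a - r) * t := by ring
      rw [e3, show (r + (a - r) * t - a) / (r - a) = 1 - t by field_simp; ring]
    rw [e1] at h
    have e4 : (a - r) * 0 + r = r := by ring
    have e5 : (a - r) * 1 + r = a := by ring
    rw [e4, e5] at h
    rw [h, intervalIntegral.integral_symm]
    have e6 : (∫ u in a..r, ((u - a) / (r - a)) ^ (α - 1) * f u)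
        = ((r - a) ^ (α - 1))⁻¹ * ∫ u in a..r, (u - a) ^ (α - 1) * f u := by
      rw [← intervalIntegral.integral_const_mul]
      apply intervalIntegral.integral_congr
      intro u hu
      rw [uIcc_of_le har.le] at hu
      show ((u - a) / (r - a)) ^ (α - 1) * f u = ((r - a) ^ (α - 1))⁻¹ * ((u - a) ^ (α - 1) * f u)
      rw [Real.div_rpow (by linarith [hu.1]) hra.le]
      field_simp
    rw [e6]
    rw [smul_eq_mul]
    field_simp [hpowsplit]
    rw [hpowsplit]; ring
  have hγne : Real.Gamma α ≠ 0 := (Real.Gamma_pos_of_pos hα).ne'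
  have hpowne : (r - a) ^ α ≠ 0 := (Real.rpow_pos_of_pos hra α).ne'
  have hGamma : Real.Gamma (α + 1) = α * Real.Gamma α := Real.Gamma_add_one hα.ne'
  have hmain : (∫ t in (0:ℝ)..1, ((1 - t) ^ α - t ^ α) * f' (r + (a - r) * t))
      = (∫ t in (0:ℝ)..1, (1 - t) ^ α * f' (r + (a - r) * t))
        - ∫ t in (0:ℝ)..1, t ^ α * f' (r + (a - r) * t) := by
    rw [← intervalIntegral.integral_sub hJ1int hJ2int]
    exact intervalIntegral.integral_congr fun t _ => by ring
  rw [hmain, RLleft, RLright, hGamma]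
  rw [hsubA1] at eq1
  rw [hsubA2] at eq2
  have hcancel : α * Real.Gamma α / (2 * (r - a) ^ α)
        * ((1 / Real.Gamma α) * (∫ t in a..r, (r - t) ^ (α - 1) * f t)
          + (1 / Real.Gamma α) * (∫ t in a..r, (t - a) ^ (α - 1) * f t))
      = α / (2 * (r - a) ^ α)
        * ((∫ t in a..r, (r - t) ^ (α - 1) * f t) + (∫ t in a..r, (t - a) ^ (α - 1) * f t)) := by
    field_simp
  rw [hcancel]
  linear_combination eq1 / 2 - eq2 / 2
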